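/- Let A be a ℤ-graded ring, M a ℤ-graded A-bimodule, and q ∈ A an invertible central element of degree 0 with associated ring automorphism f_q. Then the identity maps M ⊗_ℤ A^{⊗_ℤ n} → M ⊗_ℤ A^{⊗_ℤ n} define an isomorphism of chain complexes from the quantum Hochschild complex qCH_•(A; M) (with parameter q) to the ordinary Hochschild complex CH_•(A; {}_{f_q}M) of A with coefficients in the left-twisted bimodule {}_{f_q}M. Consequently, qHH_n(A; M) ≅ HH_n(A; {}_{f_q}M) for all n ≥ 0. -/

import Mathlib

open MulOpposite TensorProduct

/-- The `i`-th "multiply adjacent factors" face map on tuples: given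
`a = (a_1, …, a_{n+1})` (zero-indexed as `a : Fin (n+1) → A`), `qHHFace i a` is the
tuple `(a_1, …, a_i * a_{i+1}, …, a_{n+1})` of length `n`, where the factors in
positions `i` and `i+1` (zero-indexed) have been multiplied. -/
def qHHFace {A : Type*} [Ring A] {n : ℕ} (i : Fin n) (a : Fin (n + 1) → A) :
    Fin n → A := fun j =>
  if j.val < i.val then a j.castSucc
  else if j.val = i.val then a i.castSucc * a i.succ
  else a j.succ

/-- The homology in degree `n + 1` of a chain complex of abelian groups with chain
groups `C n` and differentials `δ n : C (n+1) → C n`: the kernel of `δ n` modulo the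
image of `δ (n+1)`. -/
abbrev chainHomologySucc {C : ℕ → Type*} [∀ n, AddCommGroup (C n)]
    (δ : ∀ n : ℕ, C (n + 1) →+ C n) (n : ℕ) : Type _ :=
  (δ n).ker ⧸ ((δ (n + 1)).range.addSubgroupOf (δ n).ker)

/-- The homology in degree `0` of a chain complex of abelian groups with chain groups
`C n` and differentials `δ n : C (n+1) → C n`: the cokernel of `δ 0`. -/
abbrev chainHomologyZero {C : ℕ → Type*} [∀ n, AddCommGroup (C n)]
    (δ : ∀ n : ℕ, C (n + 1) →+ C n) : Type _ :=
  C 0 ⧸ (δ 0).range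

/-- Let `A` be a ℤ-graded ring, `M` a ℤ-graded `A`-bimodule, and `q` an invertible
central element of degree `0` with associated ring automorphism `f_q` (determined by
`f_q a = q^(-n) * a` for `a ∈ 𝒜 n`).  Let `δq` be the differential of the quantum
Hochschild complex `qCH_•(A; M)` (with parameter `q`) and `δh` the differential of the
ordinary Hochschild complex `CH_•(A; {}_{f_q}M)` of `A` with coefficients in the
left-twisted bimodule `{}_{f_q}M` (same right action, left action `a ⋄ m := f_q a • m`),
both with chain groups `M ⊗_ℤ A^{⊗_ℤ n}`.  Then the identity maps
`M ⊗_ℤ A^{⊗_ℤ n} → M ⊗_ℤ A^{⊗_ℤ n}` define an isomorphism of chain complexes from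
`qCH_•(A; M)` to `CH_•(A; {}_{f_q}M)`, i.e. `δq = δh`; consequently
`qHH_n(A; M) ≅ HH_n(A; {}_{f_q}M)` for all `n ≥ 0`. -/
theorem qHH_eq_hochschild_of_twisted {A : Type*} [Ring A]
    (𝒜 : ℤ → AddSubgroup A) [GradedRing 𝒜]
    {M : Type*} [AddCommGroup M] [Module A M] [Module Aᵐᵒᵖ M]
    [SMulCommClass A Aᵐᵒᵖ M]
    (ℳ : ℤ → AddSubgroup M) [DirectSum.Decomposition ℳ]
    (hleft : ∀ (e d : ℤ), ∀ a ∈ 𝒜 e, ∀ m ∈ ℳ d, a • m ∈ ℳ (e + d))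
    (hright : ∀ (d e : ℤ), ∀ m ∈ ℳ d, ∀ a ∈ 𝒜 e, op a • m ∈ ℳ (d + e))
    (q : Aˣ)
    (hcentral : ∀ a : A, (q : A) * a = a * (q : A))
    (hdeg : (q : A) ∈ 𝒜 0)
    (f : A →+* A)
    (hf : ∀ (n : ℤ) (a : A), a ∈ 𝒜 n → f a = ((q ^ (-n) : Aˣ) : A) * a)
    -- the quantum Hochschild differential:
    (δq : ∀ n : ℕ, (M ⊗[ℤ] TensorPower ℤ (n + 1) A) →+ (M ⊗[ℤ] TensorPower ℤ n A))
    (hδq : ∀ (n : ℕ) (m : M) (a : Fin (n + 1) → A) (k : ℤ), a (Fin.last n) ∈ 𝒜 k →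
      δq n (m ⊗ₜ[ℤ] PiTensorProduct.tprod ℤ a) =
        (op (a 0) • m) ⊗ₜ[ℤ] PiTensorProduct.tprod ℤ (fun j : Fin n => a j.succ)
        + ∑ i : Fin n, ((-1 : ℤ) ^ (i.val + 1)) •
            (m ⊗ₜ[ℤ] PiTensorProduct.tprod ℤ (qHHFace i a))
        + ((-1 : ℤ) ^ (n + 1)) •
            (((((q ^ (-k) : Aˣ) : A) * a (Fin.last n)) • m) ⊗ₜ[ℤ]
              PiTensorProduct.tprod ℤ (fun j : Fin n => a j.castSucc)))
    (hδq2 : ∀ n : ℕ, (δq n).comp (δq (n + 1)) = 0)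
    -- the ordinary Hochschild differential of the left-twisted bimodule `{}_{f_q}M`:
    (δh : ∀ n : ℕ, (M ⊗[ℤ] TensorPower ℤ (n + 1) A) →+ (M ⊗[ℤ] TensorPower ℤ n A))
    (hδh : ∀ (n : ℕ) (m : M) (a : Fin (n + 1) → A),
      δh n (m ⊗ₜ[ℤ] PiTensorProduct.tprod ℤ a) =
        (op (a 0) • m) ⊗ₜ[ℤ] PiTensorProduct.tprod ℤ (fun j : Fin n => a j.succ)
        + ∑ i : Fin n, ((-1 : ℤ) ^ (i.val + 1)) •
            (m ⊗ₜ[ℤ] PiTensorProduct.tprod ℤ (qHHFace i a))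
        + ((-1 : ℤ) ^ (n + 1)) •
            ((f (a (Fin.last n)) • m) ⊗ₜ[ℤ]
              PiTensorProduct.tprod ℤ (fun j : Fin n => a j.castSucc)))
    (hδh2 : ∀ n : ℕ, (δh n).comp (δh (n + 1)) = 0) :
    (∀ n : ℕ, δq n = δh n) ∧
    Nonempty (chainHomologyZero (C := fun n => M ⊗[ℤ] TensorPower ℤ n A) δq ≃+
      chainHomologyZero (C := fun n => M ⊗[ℤ] TensorPower ℤ n A) δh) ∧
    (∀ n : ℕ, Nonempty (chainHomologySucc (C := fun n => M ⊗[ℤ] TensorPower ℤ n A) δq n ≃+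
      chainHomologySucc (C := fun n => M ⊗[ℤ] TensorPower ℤ n A) δh n)) := by
  have key : ∀ n : ℕ, δq n = δh n := by
    intro n
    -- it suffices to prove equality on elements `m ⊗ₜ tprod a`
    have htprod : ∀ (m : M) (a : Fin (n + 1) → A),
        δq n (m ⊗ₜ[ℤ] PiTensorProduct.tprod ℤ a) =
        δh n (m ⊗ₜ[ℤ] PiTensorProduct.tprod ℤ a) := by
      intro m a
      have main : ∀ b : A,
          δq n (m ⊗ₜ[ℤ] PiTensorProduct.tprod ℤ (Function.update a (Fin.last n) b)) =
          δh n (m ⊗ₜ[ℤ] PiTensorProduct.tprod ℤ (Function.update a (Fin.last n) b)) := by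
        intro b
        induction b using DirectSum.Decomposition.inductionOn 𝒜 with
        | zero =>
            rw [(PiTensorProduct.tprod ℤ : MultilinearMap ℤ (fun _ : Fin (n+1) => A) _).map_update_zero,
              TensorProduct.tmul_zero, map_zero, map_zero]
        | homogeneous x =>
            rename_i k
            set a' := Function.update a (Fin.last n) (x : A) with ha'
            have hlast : a' (Fin.last n) = (x : A) := Function.update_self _ _ _
            rw [hδq n m a' k (hlast ▸ x.2), hδh n m a']
            congr 3
            rw [hlast, hf k x x.2]
        | add x y hx hy =>
            rw [(PiTensorProduct.tprod ℤ : MultilinearMap ℤ (fun _ : Fin (n+1) => A) _).map_update_add,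
              TensorProduct.tmul_add, map_add, map_add, hx, hy]
      have := main (a (Fin.last n))
      rwa [Function.update_eq_self] at this
    ext x
    induction x using TensorProduct.induction_on with
    | zero => simp
    | tmul m t =>
        induction t using PiTensorProduct.induction_on with
        | smul_tprod r a =>
            rw [TensorProduct.tmul_smul, map_zsmul, map_zsmul, htprod]
        | add x y hx hy =>
            rw [TensorProduct.tmul_add, map_add, map_add, hx, hy]
    | add x y hx hy => rw [map_add, map_add, hx, hy]
  have hfun : δq = δh := funext key
  subst hfun
  exact ⟨key, ⟨AddEquiv.refl _⟩, fun n => ⟨AddEquiv.refl _⟩⟩
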